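/- For all positive integers m, n and all 0 < s < r there exist constants c, C > 0, depending only on m, n and r/s, with the following property. Let π₀, π ⊂ ℝ^{m+n} be m-dimensional linear subspaces with ‖p_π − p_{π₀}‖ ≤ c, where p_π, p_{π₀} denote the orthogonal projections onto π and π₀ and ‖·‖ the operator norm. Let f : B_r(π₀) → π₀^⊥ be Lipschitz with Lip(f) ≤ c and sup|f| ≤ c r, where B_r(π₀) is the closed ball of radius r centered at 0 in π₀. Then there exists a Lipschitz map g : B_s(π) → π^⊥ such that {x + f(x) : x ∈ B_r(π₀)} ∩ {z ∈ ℝ^{m+n} : p_π(z) ∈ B_s(π)} = {y + g(y) : y ∈ B_s(π)}, sup|g| ≤ C r ‖p_π − p_{π₀}‖ + C sup|f|, and Lip(g) ≤ C ‖p_π − p_{π₀}‖ + C Lip(f). -/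

import Mathlib

open Module

/-- The orthogonal projection of `ℝ^{m+n}` onto a subspace, viewed as an endomorphism. -/
noncomputable def projL {N : ℕ} (π : Submodule ℝ (EuclideanSpace ℝ (Fin N))) :
    EuclideanSpace ℝ (Fin N) →L[ℝ] EuclideanSpace ℝ (Fin N) :=
  π.subtypeL.comp (Submodule.orthogonalProjection π)

section Aux

variable {N : ℕ}

lemma projL_apply (π : Submodule ℝ (EuclideanSpace ℝ (Fin N))) (v : EuclideanSpace ℝ (Fin N)) :
    projL π v = (Submodule.orthogonalProjection π v : EuclideanSpace ℝ (Fin N)) := rfl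

lemma projL_mem (π : Submodule ℝ (EuclideanSpace ℝ (Fin N))) (v : EuclideanSpace ℝ (Fin N)) :
    projL π v ∈ π := (Submodule.orthogonalProjection π v).2

lemma projL_of_mem {π : Submodule ℝ (EuclideanSpace ℝ (Fin N))}
    {v : EuclideanSpace ℝ (Fin N)} (hv : v ∈ π) : projL π v = v := by
  rw [projL_apply]
  exact Submodule.starProjection_eq_self_iff.mpr hv

lemma projL_of_mem_orth {π : Submodule ℝ (EuclideanSpace ℝ (Fin N))}
    {v : EuclideanSpace ℝ (Fin N)} (hv : v ∈ πᗮ) : projL π v = 0 := by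
  rw [projL_apply, Submodule.orthogonalProjectionOnto_apply_of_mem_orthogonal hv,
    Submodule.coe_zero]

lemma projL_norm_le (π : Submodule ℝ (EuclideanSpace ℝ (Fin N))) (v : EuclideanSpace ℝ (Fin N)) :
    ‖projL π v‖ ≤ ‖v‖ := by
  rw [projL_apply]
  calc ‖(Submodule.orthogonalProjection π v : EuclideanSpace ℝ (Fin N))‖
      = ‖Submodule.orthogonalProjection π v‖ := (Submodule.coe_norm _).symm
    _ ≤ ‖Submodule.orthogonalProjection π‖ * ‖v‖ := (Submodule.orthogonalProjection π).le_opNorm v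
    _ ≤ 1 * ‖v‖ :=
        mul_le_mul_of_nonneg_right (Submodule.orthogonalProjectionOnto_norm_le π) (norm_nonneg v)
    _ = ‖v‖ := one_mul ‖v‖

/-- A graph point over `π₀` projects to its base point under `projL π₀`. -/
lemma projL_graph (π₀ : Submodule ℝ (EuclideanSpace ℝ (Fin N))) (x : π₀) (w : π₀ᗮ) :
    projL π₀ ((x : EuclideanSpace ℝ (Fin N)) + w) = x := by
  rw [map_add, projL_of_mem x.2, projL_of_mem_orth w.2, add_zero]

end Aux

set_option maxHeartbeats 2000000

/-- For all positive integers `m, n` and all `0 < s < r` there exist constants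
`c, C > 0` (depending only on `m, n, r/s`) with the following property. Let `π₀, π ⊂ ℝ^{m+n}` be
`m`-dimensional subspaces with `‖p_π − p_{π₀}‖ ≤ c` (operator norm of the orthogonal
projections), and let `f : B_r(π₀) → π₀^⊥` be Lipschitz with constant `K ≤ c` and `sup|f| ≤ M`
with `M ≤ c r`. Then there is a Lipschitz `g : B_s(π) → π^⊥` whose graph coincides with the part
of the graph of `f` lying over `B_s(π)`, with `sup|g| ≤ C r ‖p_π − p_{π₀}‖ + C M` and
`Lip(g) ≤ C ‖p_π − p_{π₀}‖ + C K`. -/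
theorem graphical_reparametrization (m n : ℕ) (hm : 0 < m) (hn : 0 < n)
    (s r : ℝ) (hs : 0 < s) (hsr : s < r) :
    ∃ c C : ℝ, 0 < c ∧ 0 < C ∧
      ∀ π₀ π : Submodule ℝ (EuclideanSpace ℝ (Fin (m + n))),
        finrank ℝ π₀ = m → finrank ℝ π = m →
        ‖projL π - projL π₀‖ ≤ c →
        ∀ (f : π₀ → π₀ᗮ) (K M : ℝ), 0 ≤ K → K ≤ c → 0 ≤ M → M ≤ c * r →
          (∀ x y : π₀, ‖x‖ ≤ r → ‖y‖ ≤ r → ‖f x - f y‖ ≤ K * ‖x - y‖) →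
          (∀ x : π₀, ‖x‖ ≤ r → ‖f x‖ ≤ M) →
          ∃ g : π → πᗮ,
            ({z : EuclideanSpace ℝ (Fin (m + n)) |
                ∃ x : π₀, ‖x‖ ≤ r ∧ z = (x : EuclideanSpace ℝ (Fin (m + n))) + (f x : EuclideanSpace ℝ (Fin (m + n)))} ∩
              {z : EuclideanSpace ℝ (Fin (m + n)) | ‖projL π z‖ ≤ s}) =
              {z : EuclideanSpace ℝ (Fin (m + n)) |
                ∃ y : π, ‖y‖ ≤ s ∧ z = (y : EuclideanSpace ℝ (Fin (m + n))) + (g y : EuclideanSpace ℝ (Fin (m + n)))} ∧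
            (∀ y : π, ‖y‖ ≤ s → ‖g y‖ ≤ C * r * ‖projL π - projL π₀‖ + C * M) ∧
            (∀ y y' : π, ‖y‖ ≤ s → ‖y'‖ ≤ s →
              ‖g y - g y'‖ ≤ (C * ‖projL π - projL π₀‖ + C * K) * ‖y - y'‖) := by
  classical
  let E := EuclideanSpace ℝ (Fin (m + n))
  set c : ℝ := (r - s) / (16 * r) with hcdef
  have hr : 0 < r := hs.trans hsr
  have hc : 0 < c := div_pos (by linarith) (by linarith)
  have hc16 : c ≤ 1 / 16 := by
    rw [hcdef, div_le_div_iff₀ (by linarith) (by norm_num)]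
    nlinarith
  refine ⟨c, 4, hc, by norm_num, ?_⟩
  intro π₀ π hrk₀ hrk hεc f K M hK0 hKc hM0 hMc hlip hbd
  set ε : ℝ := ‖projL π - projL π₀‖ with hεdef
  have hε0 : 0 ≤ ε := norm_nonneg _
  have hop : ∀ v : E, ‖(projL π - projL π₀) v‖ ≤ ε * ‖v‖ :=
    fun v => (projL π - projL π₀).le_opNorm v
  -- the graph map
  set F : π₀ → E := fun x => (x : E) + (f x : E) with hFdef
  have hK1 : K ≤ 1 := hKc.trans (hc16.trans (by norm_num))
  have hε1 : ε ≤ 1 / 16 := hεc.trans hc16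
  -- key identity
  have key1 : ∀ x : π₀, projL π (F x) = (x : E) + (projL π - projL π₀) (F x) := by
    intro x
    have h0 : projL π₀ (F x) = (x : E) := projL_graph π₀ x (f x)
    have : (projL π - projL π₀) (F x) = projL π (F x) - projL π₀ (F x) := rfl
    rw [this, h0]; abel
  -- distance bound on F
  have hFd : ∀ x x' : π₀, ‖x‖ ≤ r → ‖x'‖ ≤ r →
      ‖F x - F x'‖ ≤ (1 + K) * ‖x - x'‖ := by
    intro x x' hx hx'
    have hn : ‖x - x'‖ = ‖(x : E) - x'‖ := by
      rw [Submodule.coe_norm, AddSubgroupClass.coe_sub]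
    have h2 : ‖(f x : E) - f x'‖ ≤ K * ‖x - x'‖ := by
      have := hlip x x' hx hx'
      rwa [Submodule.coe_norm, AddSubgroupClass.coe_sub] at this
    have h3 : ‖F x - F x'‖ ≤ ‖(x : E) - x'‖ + ‖(f x : E) - f x'‖ := by
      have h1 : F x - F x' = ((x : E) - x') + ((f x : E) - f x') := by
        simp only [hFdef]; abel
      rw [h1]; exact norm_add_le _ _
    have hr' : (1 + K) * ‖x - x'‖ = ‖x - x'‖ + K * ‖x - x'‖ := by ring
    linarith
  have hFd' : ∀ x x' : π₀, ‖x‖ ≤ r → ‖x'‖ ≤ r →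
      ‖(projL π - projL π₀) (F x) - (projL π - projL π₀) (F x')‖ ≤ 2 * c * ‖x - x'‖ := by
    intro x x' hx hx'
    calc ‖(projL π - projL π₀) (F x) - (projL π - projL π₀) (F x')‖
        = ‖(projL π - projL π₀) (F x - F x')‖ := by rw [map_sub]
      _ ≤ ε * ‖F x - F x'‖ := hop _
      _ ≤ ε * ((1 + K) * ‖x - x'‖) := by
          apply mul_le_mul_of_nonneg_left (hFd x x' hx hx') hε0
      _ ≤ 2 * c * ‖x - x'‖ := by
          have h : ε * (1 + K) ≤ 2 * c := by
            nlinarith [mul_le_mul_of_nonneg_left hK1 hε0]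
          calc ε * ((1 + K) * ‖x - x'‖) = ε * (1 + K) * ‖x - x'‖ := by ring
            _ ≤ 2 * c * ‖x - x'‖ := mul_le_mul_of_nonneg_right h (norm_nonneg _)
  have h2c : 2 * c ≤ 1 / 2 := by linarith
  -- lower bilipschitz bound for the projected graph map
  have hlow : ∀ x x' : π₀, ‖x‖ ≤ r → ‖x'‖ ≤ r →
      ‖x - x'‖ ≤ 2 * ‖projL π (F x) - projL π (F x')‖ := by
    intro x x' hx hx'
    have h1 : (x : E) - x' = (projL π (F x) - projL π (F x'))
        - ((projL π - projL π₀) (F x) - (projL π - projL π₀) (F x')) := by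
      rw [key1 x, key1 x']; abel
    have h2 : ‖x - x'‖ = ‖(x : E) - x'‖ := by
      rw [Submodule.coe_norm, AddSubgroupClass.coe_sub]
    have h3 : ‖(x : E) - x'‖ ≤ ‖projL π (F x) - projL π (F x')‖
        + ‖(projL π - projL π₀) (F x) - (projL π - projL π₀) (F x')‖ := by
      rw [h1]; exact norm_sub_le _ _
    have h4 := hFd' x x' hx hx'
    have h5 : ‖x - x'‖ ≤ ‖projL π (F x) - projL π (F x')‖ + (1 / 2) * ‖x - x'‖ := by
      rw [h2]
      calc ‖(x : E) - x'‖ ≤ ‖projL π (F x) - projL π (F x')‖ + 2 * c * ‖x - x'‖ := by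
            linarith
        _ ≤ ‖projL π (F x) - projL π (F x')‖ + (1 / 2) * ‖x - x'‖ := by
            have := norm_nonneg (x - x'); nlinarith
    linarith
  have hinj : ∀ x x' : π₀, ‖x‖ ≤ r → ‖x'‖ ≤ r →
      Submodule.orthogonalProjection π (F x) = Submodule.orthogonalProjection π (F x') → x = x' := by
    intro x x' hx hx' h
    have hp : projL π (F x) = projL π (F x') := by
      rw [projL_apply, projL_apply, h]
    have := hlow x x' hx hx'
    rw [hp, sub_self, norm_zero] at this
    have : ‖x - x'‖ = 0 := le_antisymm (by linarith) (norm_nonneg _)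
    rwa [norm_sub_eq_zero_iff] at this
  set ρ : ℝ := (s + r) / 2 with hρdef
  have hρr : ρ ≤ r := by rw [hρdef]; linarith
  have hρ0 : 0 ≤ ρ := by rw [hρdef]; linarith
  -- existence of the base point over each y ∈ B_s(π)
  have exists_x : ∀ y : π, ‖y‖ ≤ s →
      ∃ x : π₀, ‖x‖ ≤ ρ ∧ Submodule.orthogonalProjection π (F x) = y := by
    intro y hy
    have hyE : ‖(y : E)‖ ≤ s := by rwa [← Submodule.coe_norm]
    set T : π₀ → π₀ := fun x => x + Submodule.orthogonalProjection π₀ ((y : E) - projL π (F x))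
      with hTdef
    have hTd : ∀ x x' : π₀, ‖x‖ ≤ r → ‖x'‖ ≤ r → ‖T x - T x'‖ ≤ 2 * c * ‖x - x'‖ := by
      intro x x' hx hx'
      have hcoe : (↑(T x - T x') : E) =
          ((x : E) - x') - projL π₀ (projL π (F x) - projL π (F x')) := by
        simp only [hTdef, AddSubgroupClass.coe_sub, Submodule.coe_add, projL_apply, map_sub]
        abel
      have h1 : projL π₀ (projL π (F x) - projL π (F x')) = ((x : E) - x')
          + projL π₀ ((projL π - projL π₀) (F x) - (projL π - projL π₀) (F x')) := by
        rw [key1 x, key1 x']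
        have harg : ((x : E) + (projL π - projL π₀) (F x))
            - ((x' : E) + (projL π - projL π₀) (F x'))
            = ((x : E) - x') + ((projL π - projL π₀) (F x) - (projL π - projL π₀) (F x')) := by
          abel
        rw [harg, map_add]
        congr 1
        exact projL_of_mem (Submodule.sub_mem π₀ x.2 x'.2)
      have h2 : (↑(T x - T x') : E) =
          - projL π₀ ((projL π - projL π₀) (F x) - (projL π - projL π₀) (F x')) := by
        rw [hcoe, h1]; abel
      calc ‖T x - T x'‖
          = ‖(↑(T x - T x') : E)‖ := Submodule.coe_norm _
        _ = ‖projL π₀ ((projL π - projL π₀) (F x) - (projL π - projL π₀) (F x'))‖ := by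
            rw [h2, norm_neg]
        _ ≤ ‖(projL π - projL π₀) (F x) - (projL π - projL π₀) (F x')‖ := projL_norm_le _ _
        _ ≤ 2 * c * ‖x - x'‖ := hFd' x x' hx hx'
    have hT0 : ‖T 0‖ ≤ s + c * (c * r) := by
      have h1 : (↑(T 0) : E) = projL π₀ ((y : E) - projL π (F 0)) := by
        simp only [hTdef, Submodule.coe_add, Submodule.coe_zero, projL_apply, zero_add]
      have h2 : projL π (F 0) = (projL π - projL π₀) (F 0) := by
        rw [key1 0, Submodule.coe_zero, zero_add]
      have h3 : ‖F (0 : π₀)‖ ≤ M := by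
        have : F (0 : π₀) = ((f 0 : E)) := by
          simp only [hFdef, Submodule.coe_zero, zero_add]
        rw [this, ← Submodule.coe_norm]
        exact hbd 0 (by rw [norm_zero]; linarith)
      calc ‖T 0‖ = ‖(↑(T 0) : E)‖ := Submodule.coe_norm _
        _ = ‖projL π₀ ((y : E) - projL π (F 0))‖ := by rw [h1]
        _ ≤ ‖(y : E) - projL π (F 0)‖ := projL_norm_le _ _
        _ ≤ ‖(y : E)‖ + ‖projL π (F 0)‖ := norm_sub_le _ _
        _ ≤ s + ε * M := by
            have : ‖projL π (F 0)‖ ≤ ε * M := by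
              rw [h2]
              calc ‖(projL π - projL π₀) (F 0)‖ ≤ ε * ‖F 0‖ := hop _
                _ ≤ ε * M := mul_le_mul_of_nonneg_left h3 hε0
            linarith
        _ ≤ s + c * (c * r) := by nlinarith
    have hmaps : Set.MapsTo T (Metric.closedBall (0 : π₀) ρ) (Metric.closedBall (0 : π₀) ρ) := by
      intro x hx
      rw [Metric.mem_closedBall, dist_zero_right] at hx ⊢
      have h1 : ‖T x - T 0‖ ≤ 2 * c * ‖x - 0‖ :=
        hTd x 0 (le_trans hx hρr) (by rw [norm_zero]; linarith)
      rw [sub_zero] at h1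
      have h2 : ‖T x‖ ≤ ‖T x - T 0‖ + ‖T 0‖ := by
        have h0 : T x = (T x - T 0) + T 0 := by abel
        calc ‖T x‖ = ‖(T x - T 0) + T 0‖ := by conv_lhs => rw [h0]
          _ ≤ ‖T x - T 0‖ + ‖T 0‖ := norm_add_le _ _
      have hcr : c * (c * r) ≤ (r - s) / 256 := by
        have : c * (16 * r) = r - s := by
          rw [hcdef]; field_simp
        nlinarith
      have h2cρ : 2 * c * ρ ≤ (r - s) / 8 := by
        have : c * (16 * r) = r - s := by rw [hcdef]; field_simp
        nlinarith
      calc ‖T x‖ ≤ 2 * c * ‖x‖ + ‖T 0‖ := by nlinarith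
        _ ≤ 2 * c * ρ + (s + c * (c * r)) := by nlinarith
        _ ≤ (r - s) / 8 + s + (r - s) / 256 := by linarith
        _ ≤ ρ := by rw [hρdef]; linarith
    have hclosed : IsComplete (Metric.closedBall (0 : π₀) ρ) :=
      Metric.isClosed_closedBall.isComplete
    have hcontr : ContractingWith (1 / 2 : NNReal) (hmaps.restrict T _ _) := by
      constructor
      · rw [← NNReal.coe_lt_coe]; norm_num
      · apply LipschitzWith.of_dist_le_mul
        rintro ⟨x, hx⟩ ⟨x', hx'⟩
        have hx1 : ‖x‖ ≤ ρ := by rwa [Metric.mem_closedBall, dist_zero_right] at hx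
        have hx'1 : ‖x'‖ ≤ ρ := by rwa [Metric.mem_closedBall, dist_zero_right] at hx'
        have h1 : ‖T x - T x'‖ ≤ 2 * c * ‖x - x'‖ :=
          hTd x x' (hx1.trans hρr) (hx'1.trans hρr)
        have hld : dist (hmaps.restrict T _ _ ⟨x, hx⟩) (hmaps.restrict T _ _ ⟨x', hx'⟩)
            = ‖T x - T x'‖ := by
          rw [Subtype.dist_eq]
          simp only [Set.MapsTo.val_restrict_apply]
          exact dist_eq_norm _ _
        have hrd : dist (⟨x, hx⟩ : Metric.closedBall (0 : π₀) ρ) ⟨x', hx'⟩ = ‖x - x'‖ := by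
          rw [Subtype.dist_eq]
          exact dist_eq_norm _ _
        rw [hld, hrd]
        calc ‖T x - T x'‖ ≤ 2 * c * ‖x - x'‖ := h1
          _ ≤ (1 / 2 : NNReal) * ‖x - x'‖ := by
              apply mul_le_mul_of_nonneg_right _ (norm_nonneg _)
              push_cast; linarith
    obtain ⟨x, hxmem, hfix, -, -⟩ := hcontr.exists_fixedPoint' hclosed hmaps
      (x := 0) (by simpa [Metric.mem_closedBall] using hρ0) (edist_ne_top _ _)
    rw [Metric.mem_closedBall, dist_zero_right] at hxmem
    refine ⟨x, hxmem, ?_⟩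
    have hfix' : Submodule.orthogonalProjection π₀ ((y : E) - projL π (F x)) = 0 := by
      have h := hfix
      simp only [Function.IsFixedPt, hTdef] at h
      exact add_eq_left.mp h
    set v : E := (y : E) - projL π (F x) with hvdef
    have hv : v ∈ π := Submodule.sub_mem π y.2 (projL_mem π (F x))
    have h1 : projL π v = v := projL_of_mem hv
    have h2 : projL π₀ v = 0 := by
      rw [projL_apply, hfix', Submodule.coe_zero]
    have h3 : v = (projL π - projL π₀) v := by
      have : (projL π - projL π₀) v = projL π v - projL π₀ v := rfl
      rw [this, h1, h2, sub_zero]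
    have h4 : ‖v‖ ≤ ε * ‖v‖ := by
      calc ‖v‖ = ‖(projL π - projL π₀) v‖ := by rw [← h3]
        _ ≤ ε * ‖v‖ := hop v
    have h5 : ‖v‖ = 0 := by nlinarith [norm_nonneg v]
    have h6 : (y : E) = projL π (F x) := by
      have : v = 0 := norm_eq_zero.mp h5
      rw [hvdef] at this
      exact sub_eq_zero.mp this
    exact Subtype.ext ((projL_apply π (F x)).symm.trans h6.symm)
  have hεle1 : ε ≤ 1 := hε1.trans (by norm_num)
  -- construct g
  have hmemg : ∀ (y : π) (h : ‖y‖ ≤ s),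
      F (Classical.choose (exists_x y h)) - (y : E) ∈ πᗮ := by
    intro y h
    have hsp := (Classical.choose_spec (exists_x y h)).2
    have hy' : (y : E) = Submodule.orthogonalProjection π (F (Classical.choose (exists_x y h))) := by
      rw [hsp]
    rw [hy']
    exact Submodule.sub_starProjection_mem_orthogonal _
  set g : π → πᗮ := fun y =>
    if h : ‖y‖ ≤ s then ⟨F (Classical.choose (exists_x y h)) - (y : E), hmemg y h⟩ else 0
    with hgdef
  have hg : ∀ (y : π) (h : ‖y‖ ≤ s),
      (g y : E) = F (Classical.choose (exists_x y h)) - (y : E) := by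
    intro y h
    simp only [hgdef, dif_pos h]
  have hgid : ∀ (y : π) (h : ‖y‖ ≤ s),
      (g y : E) = (f (Classical.choose (exists_x y h)) : E)
        - (projL π - projL π₀) (F (Classical.choose (exists_x y h))) := by
    intro y h
    have hsp := (Classical.choose_spec (exists_x y h)).2
    have hyx : (y : E) = projL π (F (Classical.choose (exists_x y h))) := by
      rw [projL_apply, hsp]
    rw [hg y h, hyx, key1 (Classical.choose (exists_x y h))]
    simp only [hFdef]
    abel
  refine ⟨g, ?_, ?_, ?_⟩
  · -- graph equality
    ext z
    constructor
    · rintro ⟨⟨a, har, rfl⟩, hz⟩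
      simp only [Set.mem_setOf_eq] at hz ⊢
      set y : π := Submodule.orthogonalProjection π (F a) with hydef
      have hy : ‖y‖ ≤ s := by
        rw [Submodule.coe_norm, hydef, ← projL_apply]
        exact hz
      refine ⟨y, hy, ?_⟩
      obtain ⟨hxρ, hxy⟩ := Classical.choose_spec (exists_x y hy)
      have hxa : Classical.choose (exists_x y hy) = a :=
        hinj _ a (hxρ.trans hρr) har (by rw [hxy, hydef])
      rw [hg y hy, hxa]
      simp only [hFdef]
      abel
    · rintro ⟨y, hy, rfl⟩
      obtain ⟨hxρ, hxy⟩ := Classical.choose_spec (exists_x y hy)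
      have h1 : (y : E) + (g y : E) = F (Classical.choose (exists_x y hy)) := by
        rw [hg y hy]; abel
      constructor
      · refine ⟨Classical.choose (exists_x y hy), hxρ.trans hρr, ?_⟩
        rw [hg y hy]
        simp only [hFdef]
        abel
      · simp only [Set.mem_setOf_eq]
        rw [h1]
        have h2 : projL π (F (Classical.choose (exists_x y hy))) = (y : E) := by
          rw [projL_apply, hxy]
        rw [h2, ← Submodule.coe_norm]
        exact hy
  · -- sup bound
    intro y hy
    obtain ⟨hxρ, hxy⟩ := Classical.choose_spec (exists_x y hy)
    set x := Classical.choose (exists_x y hy)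
    have hxr : ‖x‖ ≤ r := hxρ.trans hρr
    have h1 : ‖F x‖ ≤ r + M := by
      calc ‖F x‖ ≤ ‖(x : E)‖ + ‖(f x : E)‖ := norm_add_le _ _
        _ ≤ r + M := add_le_add
            (le_trans (le_of_eq (Submodule.coe_norm x).symm) hxr)
            (le_trans (le_of_eq (Submodule.coe_norm (f x)).symm) (hbd x hxr))
    have h2 : ‖g y‖ ≤ M + ε * (r + M) := by
      rw [Submodule.coe_norm, hgid y hy]
      calc ‖(f x : E) - (projL π - projL π₀) (F x)‖
          ≤ ‖(f x : E)‖ + ‖(projL π - projL π₀) (F x)‖ := norm_sub_le _ _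
        _ ≤ M + ε * (r + M) := add_le_add
            (le_trans (le_of_eq (Submodule.coe_norm (f x)).symm) (hbd x hxr))
            ((hop (F x)).trans (mul_le_mul_of_nonneg_left h1 hε0))
    have hεM : ε * M ≤ M := by nlinarith
    nlinarith [mul_nonneg hε0 hr.le]
  · -- Lipschitz bound
    intro y y' hy hy'
    obtain ⟨hxρ, hxy⟩ := Classical.choose_spec (exists_x y hy)
    obtain ⟨hx'ρ, hx'y⟩ := Classical.choose_spec (exists_x y' hy')
    set x := Classical.choose (exists_x y hy)
    set x' := Classical.choose (exists_x y' hy')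
    have hxr : ‖x‖ ≤ r := hxρ.trans hρr
    have hx'r : ‖x'‖ ≤ r := hx'ρ.trans hρr
    have hxx' : ‖x - x'‖ ≤ 2 * ‖y - y'‖ := by
      have hl := hlow x x' hxr hx'r
      have h2 : projL π (F x) = (y : E) := by rw [projL_apply, hxy]
      have h3 : projL π (F x') = (y' : E) := by rw [projL_apply, hx'y]
      rw [h2, h3] at hl
      calc ‖x - x'‖ ≤ 2 * ‖(y : E) - (y' : E)‖ := hl
        _ = 2 * ‖y - y'‖ := by
            rw [Submodule.coe_norm (y - y'), AddSubgroupClass.coe_sub]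
    have hgd : ((g y - g y' : πᗮ) : E) = ((f x : E) - f x')
        - ((projL π - projL π₀) (F x) - (projL π - projL π₀) (F x')) := by
      rw [AddSubgroupClass.coe_sub, hgid y hy, hgid y' hy']
      abel
    have hf' : ‖(f x : E) - f x'‖ ≤ K * ‖x - x'‖ := by
      have := hlip x x' hxr hx'r
      rwa [Submodule.coe_norm, AddSubgroupClass.coe_sub] at this
    have hPd : ‖(projL π - projL π₀) (F x) - (projL π - projL π₀) (F x')‖
        ≤ ε * ((1 + K) * ‖x - x'‖) := by
      rw [← map_sub]
      exact (hop _).trans (mul_le_mul_of_nonneg_left (hFd x x' hxr hx'r) hε0)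
    have h1 : ‖g y - g y'‖ ≤ K * ‖x - x'‖ + ε * ((1 + K) * ‖x - x'‖) := by
      rw [Submodule.coe_norm, hgd]
      calc ‖((f x : E) - f x')
          - ((projL π - projL π₀) (F x) - (projL π - projL π₀) (F x'))‖
          ≤ ‖(f x : E) - f x'‖
            + ‖(projL π - projL π₀) (F x) - (projL π - projL π₀) (F x')‖ := norm_sub_le _ _
        _ ≤ K * ‖x - x'‖ + ε * ((1 + K) * ‖x - x'‖) := add_le_add hf' hPd
    have h2 : K * ‖x - x'‖ + ε * ((1 + K) * ‖x - x'‖) ≤ (K + 2 * ε) * ‖x - x'‖ := by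
      nlinarith [mul_nonneg (mul_nonneg hε0 (sub_nonneg.mpr hK1)) (norm_nonneg (x - x'))]
    have h3 : (K + 2 * ε) * ‖x - x'‖ ≤ (K + 2 * ε) * (2 * ‖y - y'‖) :=
      mul_le_mul_of_nonneg_left hxx' (by linarith)
    calc ‖g y - g y'‖ ≤ (K + 2 * ε) * (2 * ‖y - y'‖) := by linarith
      _ ≤ (4 * ε + 4 * K) * ‖y - y'‖ := by
          nlinarith [mul_nonneg hK0 (norm_nonneg (y - y'))]
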